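/- arXiv:2510.13793 — 3 statements merged into one kernel-verified Lean document; each statement's English description precedes it below -/
import Mathlib

section
/- Let d ≥ 2, let X be a random vector in ℝ^d distributed according to the standard Gaussian measure N(0, I_d), and let v ∈ ℝ^d be a fixed unit vector. Then for every τ ∈ [0, 1], the probability that ⟨X, v⟩ ≥ τ‖X‖ is at most exp(−(d−1)τ²/2). -/
open MeasureTheory Real
open scoped RealInnerProductSpace ENNReal

/-- The standard Gaussian measure `N(0, I_d)` on `ℝ^d`, realized as `EuclideanSpace ℝ (Fin d)`:
the product of `d` one-dimensional standard normal distributions. -/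
noncomputable def stdGaussian (d : ℕ) : Measure (EuclideanSpace ℝ (Fin d)) :=
  (Measure.pi fun _ : Fin d => ProbabilityTheory.gaussianReal 0 1).map
    (MeasurableEquiv.toLp 2 (Fin d → ℝ))

section AuxGaussian

open ProbabilityTheory
open scoped NNReal

lemma aux_map_withDensity {α β : Type*} [MeasurableSpace α] [MeasurableSpace β]
    (e : α ≃ᵐ β) (μ : Measure α) (f : β → ℝ≥0∞) (hf : Measurable f) :
    Measure.map e (μ.withDensity (f ∘ e)) = (Measure.map e μ).withDensity f := by
  ext s hs
  rw [Measure.map_apply e.measurable hs, withDensity_apply _ (e.measurable hs),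
    withDensity_apply _ hs, setLIntegral_map hs hf e.measurable]
  rfl

lemma aux_lintegral_pi_prod : ∀ {n : ℕ} (μ : Fin n → Measure ℝ), (∀ i, SigmaFinite (μ i)) →
    ∀ (f : Fin n → ℝ → ℝ≥0∞), (∀ i, Measurable (f i)) →
    ∫⁻ x, ∏ i, f i (x i) ∂(Measure.pi μ) = ∏ i, ∫⁻ t, f i t ∂(μ i) := by
  intro n
  induction n with
  | zero => intro μ _ f _; simp
  | succ n ih =>
    intro μ hμ f hf
    have h := (measurePreserving_piFinSuccAbove μ 0).symm
    rw [← h.map_eq, lintegral_map_equiv]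
    simp_rw [MeasurableEquiv.piFinSuccAbove_symm_apply, Fin.insertNthEquiv,
      Fin.prod_univ_succ, Fin.insertNth_zero, Equiv.coe_fn_mk, Fin.cons_succ,
      Fin.zero_succAbove, cast_eq, Fin.cons_zero]
    rw [lintegral_prod_mul (f := f 0) (g := fun (y : Fin n → ℝ) => ∏ j : Fin n, f j.succ (y j)) (hf 0).aemeasurable
      (Finset.measurable_prod _ fun j _ => (hf j.succ).comp (measurable_pi_apply j)).aemeasurable]
    rw [ih _ (fun i => hμ _) _ (fun i => hf i.succ)]

lemma aux_pi_gaussian_eq (d : ℕ) :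
    (Measure.pi fun _ : Fin d => gaussianReal 0 1)
      = (volume : Measure (Fin d → ℝ)).withDensity (fun y => ∏ i, gaussianPDF 0 1 (y i)) := by
  refine Measure.pi_eq fun s hs => ?_
  rw [withDensity_apply _ (MeasurableSet.univ_pi hs),
    ← lintegral_indicator (MeasurableSet.univ_pi hs) (fun y => ∏ i, gaussianPDF 0 1 (y i))]
  have : (Set.univ.pi s).indicator (fun y => ∏ i, gaussianPDF 0 1 (y i))
      = fun y => ∏ i, (s i).indicator (gaussianPDF 0 1) (y i) := by
    funext y
    by_cases hy : y ∈ Set.univ.pi s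
    · rw [Set.indicator_of_mem hy]
      exact Finset.prod_congr rfl fun i _ =>
        (Set.indicator_of_mem (hy i (Set.mem_univ i)) _).symm
    · rw [Set.indicator_of_notMem hy]
      rw [Set.mem_pi] at hy
      push_neg at hy
      obtain ⟨i, _, hi⟩ := hy
      exact (Finset.prod_eq_zero (Finset.mem_univ i)
        (by rw [Set.indicator_of_notMem hi])).symm
  rw [this, volume_pi, aux_lintegral_pi_prod _ (fun _ => inferInstance) _
    (fun i => (measurable_gaussianPDF 0 1).indicator (hs i))]
  exact Finset.prod_congr rfl fun i _ => by
    rw [lintegral_indicator (hs i), ← gaussianReal_apply 0 one_ne_zero]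

lemma aux_stdGaussian_eq (d : ℕ) :
    stdGaussian d = (volume : Measure (EuclideanSpace ℝ (Fin d))).withDensity
      (fun x => ENNReal.ofReal ((√(2 * π))⁻¹ ^ d * rexp (-(‖x‖ ^ 2 / 2)))) := by
  have hmeas : Measurable fun x : EuclideanSpace ℝ (Fin d) =>
      ENNReal.ofReal ((√(2 * π))⁻¹ ^ d * rexp (-(‖x‖ ^ 2 / 2))) := by fun_prop
  rw [_root_.stdGaussian, aux_pi_gaussian_eq]
  have hfe : (fun x : EuclideanSpace ℝ (Fin d) =>
        ENNReal.ofReal ((√(2 * π))⁻¹ ^ d * rexp (-(‖x‖ ^ 2 / 2))))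
        ∘ (MeasurableEquiv.toLp 2 (Fin d → ℝ))
      = fun y : Fin d → ℝ => ∏ i, gaussianPDF 0 1 (y i) := by
    funext y
    simp only [Function.comp_apply, gaussianPDF, gaussianPDFReal, NNReal.coe_one, mul_one,
      sub_zero]
    rw [← ENNReal.ofReal_prod_of_nonneg (fun i _ => by positivity)]
    congr 1
    rw [Finset.prod_mul_distrib, Finset.prod_const, ← Real.exp_sum]
    have hnorm : ‖(MeasurableEquiv.toLp 2 (Fin d → ℝ)) y‖ ^ 2 = ∑ i, y i ^ 2 := by
      rw [EuclideanSpace.norm_eq, Real.sq_sqrt (by positivity)]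
      simp only [Real.norm_eq_abs, sq_abs]
      rfl
    rw [hnorm, Finset.card_univ, Fintype.card_fin]
    congr 1
    simp only [neg_div]
    rw [Finset.sum_neg_distrib, ← Finset.sum_div]
  have hvol : Measure.map (⇑(MeasurableEquiv.toLp 2 (Fin d → ℝ)))
      (volume : Measure (Fin d → ℝ)) = volume :=
    (MeasurePreserving.symm _ (EuclideanSpace.volume_preserving_symm_measurableEquiv_toLp (Fin d))).map_eq
  rw [← hfe, aux_map_withDensity _ _ _ hmeas, hvol]

lemma aux_stdGaussian_map (d : ℕ)
    (L : EuclideanSpace ℝ (Fin d) ≃ₗᵢ[ℝ] EuclideanSpace ℝ (Fin d)) :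
    (stdGaussian d).map L = stdGaussian d := by
  rw [aux_stdGaussian_eq]
  have hmeas : Measurable fun x : EuclideanSpace ℝ (Fin d) =>
      ENNReal.ofReal ((√(2 * π))⁻¹ ^ d * rexp (-(‖x‖ ^ 2 / 2))) := by fun_prop
  have hL : (⇑L : EuclideanSpace ℝ (Fin d) → EuclideanSpace ℝ (Fin d))
      = L.toHomeomorph.toMeasurableEquiv := rfl
  have hfe : (fun x : EuclideanSpace ℝ (Fin d) =>
        ENNReal.ofReal ((√(2 * π))⁻¹ ^ d * rexp (-(‖x‖ ^ 2 / 2))))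
        ∘ L.toHomeomorph.toMeasurableEquiv
      = fun x => ENNReal.ofReal ((√(2 * π))⁻¹ ^ d * rexp (-(‖x‖ ^ 2 / 2))) := by
    funext x
    simp only [Function.comp_apply]
    congr 3
    rw [show (L.toHomeomorph.toMeasurableEquiv x : EuclideanSpace ℝ (Fin d)) = L x from rfl,
      L.norm_map]
  rw [hL, ← hfe, aux_map_withDensity _ _ _ hmeas, hfe]
  congr 1
  rw [← hL, L.measurePreserving.map_eq]

lemma aux_gaussian_tail {c : ℝ} (hc : 0 ≤ c) :
    gaussianReal 0 1 {t | c ≤ t} ≤ ENNReal.ofReal (rexp (-(c ^ 2 / 2))) := by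
  rw [gaussianReal_apply 0 one_ne_zero]
  have hset : {t : ℝ | c ≤ t} = Set.Ici c := rfl
  rw [hset]
  calc ∫⁻ x in Set.Ici c, gaussianPDF 0 1 x
      ≤ ∫⁻ x in Set.Ici c, ENNReal.ofReal (rexp (-(c ^ 2 / 2))) * gaussianPDF c 1 x := by
        refine setLIntegral_mono ((measurable_const.mul (measurable_gaussianPDF c 1))) ?_
        intro t ht
        simp only [Set.mem_Ici] at ht
        rw [gaussianPDF, gaussianPDF, ← ENNReal.ofReal_mul (by positivity)]
        refine ENNReal.ofReal_le_ofReal ?_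
        simp only [gaussianPDFReal, NNReal.coe_one, mul_one]
        rw [← mul_assoc, mul_comm (rexp _) _, mul_assoc]
        refine mul_le_mul_of_nonneg_left ?_ (by positivity)
        rw [← Real.exp_add]
        refine Real.exp_le_exp.mpr ?_
        nlinarith [mul_nonneg hc (sub_nonneg.mpr ht)]
    _ ≤ ∫⁻ x, ENNReal.ofReal (rexp (-(c ^ 2 / 2))) * gaussianPDF c 1 x :=
        setLIntegral_le_lintegral _ _
    _ = ENNReal.ofReal (rexp (-(c ^ 2 / 2))) := by
        rw [lintegral_const_mul _ (measurable_gaussianPDF c 1),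
          lintegral_gaussianPDF_eq_one c one_ne_zero, mul_one]

lemma aux_gaussian_moment (a : ℝ) :
    ∫⁻ t, ENNReal.ofReal (rexp (-(a ^ 2 * t ^ 2 / 2))) ∂(gaussianReal 0 1)
      = ENNReal.ofReal (√(π / ((1 + a ^ 2) / 2)) / √(2 * π)) := by
  rw [gaussianReal_of_var_ne_zero 0 one_ne_zero,
    lintegral_withDensity_eq_lintegral_mul _ (measurable_gaussianPDF 0 1)
      (by fun_prop)]
  have : ∀ t : ℝ, (gaussianPDF 0 1 * fun t => ENNReal.ofReal (rexp (-(a ^ 2 * t ^ 2 / 2)))) t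
      = ENNReal.ofReal ((√(2 * π))⁻¹ * rexp (-((1 + a ^ 2) / 2) * t ^ 2)) := by
    intro t
    simp only [Pi.mul_apply, gaussianPDF, gaussianPDFReal, NNReal.coe_one, mul_one, sub_zero]
    rw [← ENNReal.ofReal_mul (by positivity), mul_assoc, ← Real.exp_add]
    ring_nf
  simp_rw [this]
  rw [← ofReal_integral_eq_lintegral_ofReal
    (((integrable_exp_neg_mul_sq (by positivity : (0:ℝ) < (1 + a ^ 2) / 2)).const_mul _))
    (ae_of_all _ fun t => by positivity)]
  rw [integral_const_mul, integral_gaussian]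
  rw [mul_comm, ← div_eq_mul_inv]

lemma aux_main (n : ℕ) (τ : ℝ) (hτ0 : 0 ≤ τ) (hτ1 : τ < 1) :
    (Measure.pi fun _ : Fin (n + 1) => gaussianReal 0 1)
      {y : Fin (n + 1) → ℝ | τ * √(∑ i, y i ^ 2) ≤ y 0}
      ≤ ENNReal.ofReal (√(1 - τ ^ 2) ^ n) := by
  have h1τ : (0 : ℝ) < 1 - τ ^ 2 := by nlinarith
  set a : ℝ := τ / √(1 - τ ^ 2) with ha
  have ha0 : 0 ≤ a := div_nonneg hτ0 (Real.sqrt_nonneg _)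
  have ha2 : a ^ 2 = τ ^ 2 / (1 - τ ^ 2) := by
    rw [ha, div_pow, Real.sq_sqrt h1τ.le]
  set T : Set (Fin (n + 1) → ℝ) := {y | τ * √(∑ i, y i ^ 2) ≤ y 0} with hTdef
  have hT : MeasurableSet T := by
    apply measurableSet_le
    · fun_prop
    · exact measurable_pi_apply 0
  set B : Set (ℝ × (Fin n → ℝ)) := {p | a * √(∑ j, p.2 j ^ 2) ≤ p.1} with hBdef
  have hB : MeasurableSet B := by
    apply measurableSet_le
    · fun_prop
    · exact measurable_fst
  have hmp := measurePreserving_piFinSuccAbove (fun _ : Fin (n + 1) => gaussianReal 0 1) 0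
  set e₂ := MeasurableEquiv.piFinSuccAbove (fun _ : Fin (n + 1) => ℝ) 0 with he₂
  have hkey : (Measure.pi fun _ : Fin (n + 1) => gaussianReal 0 1) T
      = ((gaussianReal 0 1).prod
          (Measure.pi fun _ : Fin n => gaussianReal 0 1)) (e₂.symm ⁻¹' T) := by
    rw [← (MeasurePreserving.symm e₂ hmp).measure_preimage hT.nullMeasurableSet]
  have hsub : e₂.symm ⁻¹' T ⊆ B := by
    rintro ⟨t, z⟩ hp
    simp only [Set.mem_preimage, hTdef, Set.mem_setOf_eq, he₂,
      MeasurableEquiv.piFinSuccAbove_symm_apply, Fin.insertNthEquiv, Equiv.coe_fn_mk,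
      Fin.insertNth_zero, Fin.zero_succAbove, cast_eq, Fin.sum_univ_succ, Fin.cons_zero,
      Fin.cons_succ] at hp
    simp only [hBdef, Set.mem_setOf_eq]
    have hsum0 : (0:ℝ) ≤ ∑ j, z j ^ 2 := by positivity
    have ht0 : 0 ≤ t := le_trans (by positivity) hp
    have hsq : τ ^ 2 * (t ^ 2 + ∑ j, z j ^ 2) ≤ t ^ 2 := by
      have h := mul_self_le_mul_self (by positivity) hp
      rw [mul_mul_mul_comm, Real.mul_self_sqrt (by positivity)] at h
      nlinarith [h]
    have hgoal2 : (a * √(∑ j, z j ^ 2)) ^ 2 ≤ t ^ 2 := by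
      rw [mul_pow, Real.sq_sqrt hsum0, ha2, div_mul_eq_mul_div, div_le_iff₀ h1τ]
      nlinarith [hsq]
    have := Real.sqrt_le_sqrt hgoal2
    rwa [Real.sqrt_sq (by positivity), Real.sqrt_sq ht0] at this
  calc (Measure.pi fun _ : Fin (n + 1) => gaussianReal 0 1) T
      = ((gaussianReal 0 1).prod (Measure.pi fun _ : Fin n => gaussianReal 0 1))
          (e₂.symm ⁻¹' T) := hkey
    _ ≤ ((gaussianReal 0 1).prod (Measure.pi fun _ : Fin n => gaussianReal 0 1)) B :=
        measure_mono hsub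
    _ = ∫⁻ z, gaussianReal 0 1 {t | a * √(∑ j, z j ^ 2) ≤ t}
          ∂(Measure.pi fun _ : Fin n => gaussianReal 0 1) := by
        rw [Measure.prod_apply_symm hB]
        rfl
    _ ≤ ∫⁻ z, ENNReal.ofReal (rexp (-((a * √(∑ j, z j ^ 2)) ^ 2 / 2)))
          ∂(Measure.pi fun _ : Fin n => gaussianReal 0 1) :=
        lintegral_mono fun z => aux_gaussian_tail (by positivity)
    _ = ∫⁻ z, ∏ j, ENNReal.ofReal (rexp (-(a ^ 2 * z j ^ 2 / 2)))
          ∂(Measure.pi fun _ : Fin n => gaussianReal 0 1) := by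
        refine lintegral_congr fun z => ?_
        rw [← ENNReal.ofReal_prod_of_nonneg (fun j _ => (Real.exp_pos _).le), ← Real.exp_sum]
        congr 2
        rw [mul_pow, Real.sq_sqrt (by positivity)]
        rw [Finset.sum_neg_distrib, ← Finset.sum_div, ← Finset.mul_sum]
    _ = ∏ _j : Fin n, ∫⁻ t, ENNReal.ofReal (rexp (-(a ^ 2 * t ^ 2 / 2)))
          ∂(gaussianReal 0 1) :=
        aux_lintegral_pi_prod (fun _ => gaussianReal 0 1) (fun _ => inferInstance)
          (fun _ t => ENNReal.ofReal (rexp (-(a ^ 2 * t ^ 2 / 2)))) (fun _ => by fun_prop)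
    _ ≤ ENNReal.ofReal (√(1 - τ ^ 2) ^ n) := by
        rw [aux_gaussian_moment a]
        have hval : √(π / ((1 + a ^ 2) / 2)) / √(2 * π) = √(1 - τ ^ 2) := by
          have h2 : π / ((1 + a ^ 2) / 2) = 2 * π * (1 - τ ^ 2) := by
            rw [ha2]
            field_simp
            ring
          rw [h2, Real.sqrt_mul (by positivity),
            mul_div_cancel_left₀ _ (by positivity : √(2 * π) ≠ 0)]
        rw [hval, Finset.prod_const, Finset.card_univ, Fintype.card_fin,
          ← ENNReal.ofReal_pow (Real.sqrt_nonneg _)]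

end AuxGaussian

/-- **Exponential bound on the spherical-cap probability.** For `d ≥ 2`, a standard Gaussian
vector `X` in `ℝ^d` and a fixed unit vector `v`, for every `τ ∈ [0, 1]` the probability that
`⟪X, v⟫ ≥ τ‖X‖` (i.e. that the cosine similarity of `X` and `v` is at least `τ`) is at most
`exp(-(d-1)τ²/2)`. -/
theorem gaussian_cosine_cap_prob_le_exp (d : ℕ) (hd : 2 ≤ d)
    (v : EuclideanSpace ℝ (Fin d)) (hv : ‖v‖ = 1)
    (τ : ℝ) (hτ : τ ∈ Set.Icc (0 : ℝ) 1) :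
    (stdGaussian d {x | τ * ‖x‖ ≤ ⟪x, v⟫}).toReal
      ≤ Real.exp (-(((d : ℝ) - 1) * τ ^ 2 / 2)) := by
  obtain ⟨hτ0, hτ1e⟩ := hτ
  rcases lt_or_eq_of_le hτ1e with hτ1 | hτ1
  · -- case τ < 1
    obtain ⟨n, rfl⟩ : ∃ n, d = n + 1 := ⟨d - 1, by omega⟩
    have hnorm : ‖v‖ = ‖(EuclideanSpace.single 0 1 : EuclideanSpace ℝ (Fin (n + 1)))‖ := by
      rw [hv, EuclideanSpace.norm_single, norm_one]
    set L := Submodule.reflection (ℝ ∙ (v - (EuclideanSpace.single 0 1 : EuclideanSpace ℝ (Fin (n + 1)))))ᗮ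
      with hLdef
    have hLv : L v = EuclideanSpace.single 0 1 := Submodule.reflection_sub hnorm
    have hLe : L (EuclideanSpace.single 0 1) = v := by
      conv_rhs => rw [← Submodule.reflection_involutive
        (ℝ ∙ (v - (EuclideanSpace.single 0 1 : EuclideanSpace ℝ (Fin (n + 1)))))ᗮ v]
      rw [← hLdef, hLv]
    have hS : MeasurableSet {x : EuclideanSpace ℝ (Fin (n + 1)) | τ * ‖x‖ ≤ ⟪x, v⟫} :=
      measurableSet_le (continuous_const.mul continuous_norm).measurable
        (continuous_id.inner continuous_const).measurable
    have hS0 : MeasurableSet {x : EuclideanSpace ℝ (Fin (n + 1)) | τ * ‖x‖ ≤ x 0} :=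
      measurableSet_le (continuous_const.mul continuous_norm).measurable
        ((measurable_pi_apply 0).comp
          (MeasurableEquiv.toLp 2 (Fin (n + 1) → ℝ)).symm.measurable)
    have hmapped : stdGaussian (n + 1) {x | τ * ‖x‖ ≤ ⟪x, v⟫}
        = stdGaussian (n + 1) {x | τ * ‖x‖ ≤ x 0} := by
      conv_lhs => rw [← aux_stdGaussian_map (n + 1) L]
      rw [Measure.map_apply L.continuous.measurable hS]
      congr 1
      ext x
      simp only [Set.mem_preimage, Set.mem_setOf_eq]
      rw [L.norm_map, ← hLe, LinearIsometryEquiv.inner_map_map,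
        EuclideanSpace.inner_single_right]
      simp
    rw [hmapped, _root_.stdGaussian, Measure.map_apply (MeasurableEquiv.measurable _) hS0]
    have hpre : (MeasurableEquiv.toLp 2 (Fin (n + 1) → ℝ)) ⁻¹' {x | τ * ‖x‖ ≤ x 0}
        = {y : Fin (n + 1) → ℝ | τ * √(∑ i, y i ^ 2) ≤ y 0} := by
      ext y
      simp only [Set.mem_preimage, Set.mem_setOf_eq, EuclideanSpace.norm_eq]
      have h2 : ∀ i, ‖((MeasurableEquiv.toLp 2 (Fin (n + 1) → ℝ)) y) i‖ ^ 2
          = y i ^ 2 := fun i => by rw [Real.norm_eq_abs, sq_abs]; rfl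
      have h3 : (∑ i, ‖((MeasurableEquiv.toLp 2 (Fin (n + 1) → ℝ)) y) i‖ ^ 2)
          = ∑ i, y i ^ 2 := Finset.sum_congr rfl fun i _ => h2 i
      rw [h3]
      rfl
    rw [hpre]
    have hmain := aux_main n τ hτ0 hτ1
    have h1 : √(1 - τ ^ 2) ≤ rexp (-τ ^ 2 / 2) := by
      have hle : (1 : ℝ) - τ ^ 2 ≤ rexp (-τ ^ 2) := by
        nlinarith [Real.add_one_le_exp (-τ ^ 2)]
      have := Real.sqrt_le_sqrt hle
      rwa [← Real.exp_half] at this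
    have hreal : √(1 - τ ^ 2) ^ n ≤ rexp (-((((n : ℝ) + 1) - 1) * τ ^ 2 / 2)) := by
      calc √(1 - τ ^ 2) ^ n ≤ rexp (-τ ^ 2 / 2) ^ n :=
            pow_le_pow_left₀ (Real.sqrt_nonneg _) h1 n
        _ = rexp (-((((n : ℝ) + 1) - 1) * τ ^ 2 / 2)) := by
            rw [← Real.exp_nat_mul]
            congr 1
            ring
    refine le_trans (ENNReal.toReal_le_of_le_ofReal (by positivity) hmain) ?_
    convert hreal using 3
    · rfl
    push_cast
    ring
  · -- case τ = 1
    subst hτ1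
    have hvne : v ≠ 0 := fun h => by simp [h] at hv
    have hspan : (Submodule.span ℝ {v} : Submodule ℝ (EuclideanSpace ℝ (Fin d))) ≠ ⊤ := by
      intro htop
      have h1 : Module.finrank ℝ (Submodule.span ℝ {v} : Submodule ℝ (EuclideanSpace ℝ (Fin d)))
          = 1 := finrank_span_singleton hvne
      rw [htop, finrank_top, finrank_euclideanSpace_fin] at h1
      omega
    have hsub : {x : EuclideanSpace ℝ (Fin d) | 1 * ‖x‖ ≤ ⟪x, v⟫} ⊆
        ↑(Submodule.span ℝ {v} : Submodule ℝ (EuclideanSpace ℝ (Fin d))) := by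
      intro x hx
      · simp only [Set.mem_setOf_eq, one_mul] at hx
        have hle : ⟪x, v⟫ ≤ ‖x‖ := by
          have := real_inner_le_norm x v
          rwa [hv, mul_one] at this
        have heq : ⟪x, v⟫ = ‖x‖ * ‖v‖ := by
          rw [hv, mul_one]
          exact le_antisymm hle hx
        rw [inner_eq_norm_mul_iff_real, hv, one_smul] at heq
        exact Submodule.mem_span_singleton.mpr ⟨‖x‖, heq.symm⟩
    have hnull : stdGaussian d {x | 1 * ‖x‖ ≤ ⟪x, v⟫} = 0 := by
      refine measure_mono_null hsub ?_
      rw [aux_stdGaussian_eq]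
      exact withDensity_absolutelyContinuous _ _ (Measure.addHaar_submodule _ _ hspan)
    rw [hnull]
    simp [(Real.exp_pos _).le]
end

section
/- For every integer d ≥ 2 and every τ ∈ [0, 1], the following analytic inequality holds: (Γ(d/2) / (√π · Γ((d-1)/2))) · ∫_τ^1 (1 - t²)^{(d-3)/2} dt ≤ exp(−(d−1)τ²/2). Equivalently, ½·I_{1-τ²}((d-1)/2, 1/2) ≤ exp(−(d−1)τ²/2), where I_x(p,q) is the regularized incomplete beta function. -/
open Real

section CapAux
open Real MeasureTheory Set

lemma cap_subst (p τ : ℝ) (hτ0 : 0 ≤ τ) (hτ1 : τ ≤ 1) :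
    ∫ s in (0:ℝ)..(1-τ^2), s ^ (p-1) * (1-s) ^ (-(1/2) : ℝ)
      = 2 * ∫ t in τ..1, (1-t^2) ^ (p-1) := by
  have hx0 : (0:ℝ) ≤ 1 - τ^2 := by nlinarith
  have himg : (fun t : ℝ => 1 - t^2) '' Set.Ioo τ 1 = Set.Ioo 0 (1 - τ^2) := by
    ext s
    constructor
    · rintro ⟨t, ⟨ht1, ht2⟩, rfl⟩
      dsimp only
      constructor <;> nlinarith
    · rintro ⟨hs1, hs2⟩
      refine ⟨Real.sqrt (1 - s), ⟨?_, ?_⟩, ?_⟩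
      · exact (Real.lt_sqrt hτ0).mpr (by nlinarith)
      · exact (Real.sqrt_lt' one_pos).mpr (by nlinarith)
      · dsimp only
        rw [Real.sq_sqrt (by nlinarith)]; ring
  have hderiv : ∀ t ∈ Set.Ioo τ 1, HasDerivWithinAt (fun t : ℝ => 1 - t^2) (-(2*t)) (Set.Ioo τ 1) t := by
    intro t _
    have := ((hasDerivAt_pow 2 t).const_sub 1)
    simpa using this.hasDerivWithinAt
  have hinj : Set.InjOn (fun t : ℝ => 1 - t^2) (Set.Ioo τ 1) := by
    intro a ha b hb hab
    simp only at hab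
    nlinarith [ha.1, hb.1, ha.2, hb.2]
  rw [intervalIntegral.integral_of_le hx0, intervalIntegral.integral_of_le hτ1,
    MeasureTheory.integral_Ioc_eq_integral_Ioo, MeasureTheory.integral_Ioc_eq_integral_Ioo,
    ← himg,
    MeasureTheory.integral_image_eq_integral_abs_deriv_smul measurableSet_Ioo hderiv hinj]
  rw [← MeasureTheory.integral_const_mul]
  refine MeasureTheory.setIntegral_congr_fun measurableSet_Ioo (fun t ht => ?_)
  have ht0 : 0 < t := lt_of_le_of_lt hτ0 ht.1
  have h1 : (1 - (1 - t^2)) = t^2 := by ring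
  have h2 : ((t^2 : ℝ)) ^ (-(1/2) : ℝ) = t⁻¹ := by
    rw [Real.rpow_neg (by positivity), ← Real.sqrt_eq_rpow, Real.sqrt_sq ht0.le]
  simp only [smul_eq_mul, h1, h2, abs_of_pos (by positivity : (0:ℝ) < 2*t), neg_mul, abs_neg,
    abs_of_pos (by positivity : (0:ℝ) < 2*t)]
  field_simp

lemma beta_eq_ofReal (p : ℝ) (hp : 0 < p) :
    Complex.betaIntegral p (1/2)
      = ((∫ s in (0:ℝ)..1, s ^ (p-1) * (1-s) ^ (-(1/2) : ℝ) : ℝ) : ℂ) := by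
  rw [Complex.betaIntegral, ← intervalIntegral.integral_ofReal]
  refine intervalIntegral.integral_congr (fun x hx => ?_)
  rw [Set.uIcc_of_le (by norm_num : (0:ℝ) ≤ 1)] at hx
  push_cast
  rw [Complex.ofReal_cpow hx.1, Complex.ofReal_cpow (by linarith [hx.2])]
  norm_num

lemma beta_identity (p : ℝ) (hp : 0 < p) :
    Real.Gamma p * Real.sqrt π
      = Real.Gamma (p + 1/2) * ∫ s in (0:ℝ)..1, s ^ (p-1) * (1-s) ^ (-(1/2) : ℝ) := by
  have h := Complex.Gamma_mul_Gamma_eq_betaIntegral (s := (p:ℂ)) (t := (1/2:ℂ))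
    (by simpa using hp) (by norm_num)
  rw [beta_eq_ofReal p hp] at h
  have h2 : ((p:ℂ) + 1/2) = ((p + 1/2 : ℝ) : ℂ) := by push_cast; ring
  have h3 : ((1/2:ℂ)) = ((1/2 : ℝ) : ℂ) := by norm_num
  rw [h2, h3, Complex.Gamma_ofReal, Complex.Gamma_ofReal, Complex.Gamma_ofReal] at h
  rw [← Complex.ofReal_mul, ← Complex.ofReal_mul] at h
  have := Complex.ofReal_inj.mp h
  rwa [Real.Gamma_one_half_eq] at this

lemma beta_integrable (p : ℝ) (hp : 0 < p) :
    IntervalIntegrable (fun s : ℝ => s ^ (p-1) * (1-s) ^ (-(1/2) : ℝ)) volume 0 1 := by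
  have h := Complex.betaIntegral_convergent (u := (p:ℂ)) (v := (1/2:ℂ))
    (by simpa using hp) (by norm_num)
  rw [intervalIntegrable_iff_integrableOn_Ioc_of_le (by norm_num)] at h ⊢
  have h2 := h.re
  refine MeasureTheory.IntegrableOn.congr_fun h2 (fun x hx => ?_) measurableSet_Ioc
  have hx0 : (0:ℝ) ≤ x := hx.1.le
  have hx1 : x ≤ 1 := hx.2
  rw [show ((p:ℂ) - 1) = ((p - 1 : ℝ) : ℂ) by push_cast; ring,
    show ((1:ℂ) - (x:ℂ)) = ((1 - x : ℝ) : ℂ) by push_cast; ring,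
    show ((1:ℂ)/2 - 1) = ((-(1/2) : ℝ) : ℂ) by push_cast; ring,
    ← Complex.ofReal_cpow hx0, ← Complex.ofReal_cpow (by linarith),
    ← Complex.ofReal_mul]
  simp

lemma gamma_gautschi (p : ℝ) (hp : 0 < p) :
    Real.Gamma (p + 1/2) ≤ Real.Gamma p * Real.sqrt p := by
  have hΓp : 0 < Real.Gamma p := Real.Gamma_pos_of_pos hp
  have hΓh : 0 < Real.Gamma (p + 1/2) := Real.Gamma_pos_of_pos (by linarith)
  have hc := Real.convexOn_log_Gamma.2 (Set.mem_Ioi.mpr hp)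
    (Set.mem_Ioi.mpr (by linarith : (0:ℝ) < p + 1))
    (by norm_num : (0:ℝ) ≤ (1/2:ℝ)) (by norm_num : (0:ℝ) ≤ (1/2:ℝ)) (by norm_num)
  simp only [smul_eq_mul, Function.comp_apply] at hc
  have he : (1/2 : ℝ) * p + (1/2) * (p + 1) = p + 1/2 := by ring
  rw [he] at hc
  rw [Real.Gamma_add_one hp.ne'] at hc
  rw [Real.log_mul hp.ne' hΓp.ne'] at hc
  have hlog : Real.log (Real.Gamma (p + 1/2)) ≤ Real.log (Real.Gamma p * Real.sqrt p) := by
    rw [Real.log_mul hΓp.ne' (Real.sqrt_pos.mpr hp).ne', Real.log_sqrt hp.le]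
    linarith
  calc Real.Gamma (p + 1/2) = Real.exp (Real.log (Real.Gamma (p + 1/2))) := (Real.exp_log hΓh).symm
    _ ≤ Real.exp (Real.log (Real.Gamma p * Real.sqrt p)) := Real.exp_le_exp.mpr hlog
    _ = Real.Gamma p * Real.sqrt p := Real.exp_log (by positivity)

lemma cap_final (g B E x τ p : ℝ) (hg : 0 < g) (hE : 0 < E) (hτ : 0 < τ) (hp : 0 < p) (hx0 : 0 ≤ x)
    (hBle : B ≤ τ⁻¹ * (x / p)) (hxE : x ≤ E) (hgb : g ≤ 2 * τ * p) :
    g * ((1/2) * B) ≤ E := by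
  have h1 : g * ((1/2) * B) ≤ g * ((1/2) * (τ⁻¹ * (x/p))) := by gcongr
  have h2 : g * ((1/2) * (τ⁻¹ * (x/p))) ≤ (2*τ*p) * ((1/2) * (τ⁻¹ * (x/p))) := by
    have hnn : 0 ≤ (1/2) * (τ⁻¹ * (x/p)) := by positivity
    exact mul_le_mul_of_nonneg_right hgb hnn
  have h3 : (2*τ*p) * ((1/2) * (τ⁻¹ * (x/p))) = x := by field_simp
  linarith

lemma main_ineq (p τ : ℝ) (hp : 1/2 ≤ p) (hτ0 : 0 ≤ τ) (hτ1 : τ ≤ 1) :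
    (Real.Gamma (p + 1/2) / (Real.sqrt π * Real.Gamma p)) *
        ((1/2) * ∫ s in (0:ℝ)..(1-τ^2), s ^ (p-1) * (1-s) ^ (-(1/2) : ℝ))
      ≤ Real.exp (-(p * τ^2)) := by
  have hp0 : 0 < p := by linarith
  have hx0 : (0:ℝ) ≤ 1 - τ^2 := by nlinarith
  have hx1 : 1 - τ^2 ≤ 1 := by nlinarith
  have hΓp : 0 < Real.Gamma p := Real.Gamma_pos_of_pos hp0
  have hΓh : 0 < Real.Gamma (p + 1/2) := Real.Gamma_pos_of_pos (by linarith)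
  have hsπ : 0 < Real.sqrt π := Real.sqrt_pos.mpr Real.pi_pos
  set g : ℝ := Real.Gamma (p + 1/2) / (Real.sqrt π * Real.Gamma p) with hg
  have hgpos : 0 < g := by positivity
  set B : ℝ := ∫ s in (0:ℝ)..(1-τ^2), s ^ (p-1) * (1-s) ^ (-(1/2) : ℝ) with hB
  have hint : IntervalIntegrable (fun s : ℝ => s ^ (p-1) * (1-s) ^ (-(1/2) : ℝ)) volume 0 1 :=
    beta_integrable p hp0
  rcases le_or_gt (p * τ^2) (1/2) with hcase | hcase
  · -- small τ: bound by 1/2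
    have hB1 : B ≤ ∫ s in (0:ℝ)..1, s ^ (p-1) * (1-s) ^ (-(1/2) : ℝ) := by
      refine intervalIntegral.integral_mono_interval le_rfl hx0 hx1 ?_ hint
      filter_upwards [ae_restrict_mem measurableSet_Ioc] with s hs
      have h0s : (0:ℝ) ≤ s := hs.1.le
      have h1s : (0:ℝ) ≤ 1 - s := by linarith [hs.2]
      exact mul_nonneg (Real.rpow_nonneg h0s _) (Real.rpow_nonneg h1s _)
    have hI1 : g * ∫ s in (0:ℝ)..1, s ^ (p-1) * (1-s) ^ (-(1/2) : ℝ) = 1 := by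
      have hbid := beta_identity p hp0
      rw [hg, div_mul_eq_mul_div, div_eq_one_iff_eq (by positivity)]
      linarith [hbid]
    have hhalf : g * ((1/2) * B) ≤ 1/2 := by
      calc g * ((1/2) * B) ≤ g * ((1/2) * ∫ s in (0:ℝ)..1, s ^ (p-1) * (1-s) ^ (-(1/2) : ℝ)) := by
            gcongr
        _ = (1/2) * (g * ∫ s in (0:ℝ)..1, s ^ (p-1) * (1-s) ^ (-(1/2) : ℝ)) := by ring
        _ = 1/2 := by rw [hI1]; norm_num
    refine hhalf.trans ?_
    have hexp2 : Real.exp (1/2) ≤ 2 := by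
      nlinarith [Real.exp_one_lt_d9, Real.exp_pos (1/2),
        Real.exp_add (1/2) (1/2)]
    have : Real.exp (-(1/2)) ≤ Real.exp (-(p * τ^2)) := Real.exp_le_exp.mpr (by linarith)
    rw [Real.exp_neg] at this
    have h12 : (1:ℝ)/2 ≤ (Real.exp (1/2))⁻¹ := by
      have hcan := mul_inv_cancel₀ (Real.exp_pos (1/2)).ne'
      nlinarith [Real.exp_pos (1/2)]
    linarith
  · -- large τ
    have hτpos : 0 < τ := by
      rcases hτ0.lt_or_eq with h | h
      · exact h
      · exfalso; rw [← h] at hcase; norm_num at hcase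
    have hBle : B ≤ τ⁻¹ * ((1-τ^2) ^ p / p) := by
      have hfi : IntervalIntegrable (fun s : ℝ => s ^ (p-1) * (1-s) ^ (-(1/2) : ℝ)) volume 0 (1-τ^2) :=
        hint.mono_set (Set.uIcc_subset_uIcc (by simp) (by rw [Set.uIcc_of_le (by norm_num)]; exact ⟨hx0, hx1⟩))
      have hgi : IntervalIntegrable (fun s : ℝ => τ⁻¹ * s ^ (p-1)) volume 0 (1-τ^2) :=
        (intervalIntegral.intervalIntegrable_rpow' (by linarith)).const_mul τ⁻¹
      have hmono : B ≤ ∫ s in (0:ℝ)..(1-τ^2), τ⁻¹ * s ^ (p-1) := by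
        refine intervalIntegral.integral_mono_on hx0 hfi hgi (fun s hs => ?_)
        have hs0 : 0 ≤ s := hs.1
        have hs1 : s ≤ 1 - τ^2 := hs.2
        have hb : (1-s) ^ (-(1/2) : ℝ) ≤ τ⁻¹ := by
          have h1 : ((τ^2 : ℝ)) ^ (-(1/2) : ℝ) = τ⁻¹ := by
            rw [Real.rpow_neg (by positivity), ← Real.sqrt_eq_rpow, Real.sqrt_sq hτpos.le]
          rw [← h1]
          exact Real.rpow_le_rpow_of_nonpos (by positivity) (by linarith) (by norm_num)
        calc s ^ (p-1) * (1-s) ^ (-(1/2) : ℝ) ≤ s ^ (p-1) * τ⁻¹ := by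
              apply mul_le_mul_of_nonneg_left hb (by positivity)
          _ = τ⁻¹ * s ^ (p-1) := by ring
      rw [intervalIntegral.integral_const_mul, integral_rpow (Or.inl (by linarith))] at hmono
      rw [Real.zero_rpow (by linarith : p - 1 + 1 ≠ 0)] at hmono
      calc B ≤ τ⁻¹ * (((1-τ^2) ^ (p-1+1) - 0) / (p-1+1)) := hmono
        _ = τ⁻¹ * ((1-τ^2) ^ p / p) := by norm_num
    have hxp : (1-τ^2) ^ p ≤ Real.exp (-(p * τ^2)) := by
      have h1 : (1-τ^2 : ℝ) ≤ Real.exp (-τ^2) := by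
        have := Real.add_one_le_exp (-τ^2)
        linarith
      calc (1-τ^2) ^ p ≤ (Real.exp (-τ^2)) ^ p := Real.rpow_le_rpow hx0 h1 hp0.le
        _ = Real.exp (-τ^2 * p) := by
            rw [← Real.exp_one_rpow (-τ^2), ← Real.rpow_mul (Real.exp_pos 1).le,
              Real.exp_one_rpow]
        _ = Real.exp (-(p * τ^2)) := by ring_nf
    have hgb : g ≤ 2 * τ * p := by
      have h1 : g ≤ Real.sqrt p / Real.sqrt π := by
        rw [hg]
        rw [div_le_div_iff₀ (by positivity) hsπ]
        calc Real.Gamma (p + 1/2) * Real.sqrt π ≤ (Real.Gamma p * Real.sqrt p) * Real.sqrt π := by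
              gcongr; exact gamma_gautschi p hp0
          _ = Real.sqrt p * (Real.sqrt π * Real.Gamma p) := by ring
      refine h1.trans ?_
      rw [div_le_iff₀ hsπ]
      have hsp := Real.sq_sqrt hp0.le
      have hspi := Real.sq_sqrt Real.pi_pos.le
      have hπ3 := Real.pi_gt_three
      have hsp0 : 0 < Real.sqrt p := Real.sqrt_pos.mpr hp0
      have h6 : (6:ℝ) < (2 * τ * Real.sqrt p * Real.sqrt π)^2 := by
        have hexpand : (2 * τ * Real.sqrt p * Real.sqrt π)^2 = 4 * (p * τ^2) * π := by
          rw [mul_pow, mul_pow, mul_pow, hsp, hspi]; ring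
        rw [hexpand]
        nlinarith [hcase, hπ3]
      have key : 1 ≤ 2 * τ * Real.sqrt p * Real.sqrt π := by
        nlinarith [mul_nonneg (mul_nonneg (mul_nonneg (by norm_num : (0:ℝ) ≤ 2) hτ0) hsp0.le) hsπ.le]
      have heq : 2 * τ * p * Real.sqrt π = Real.sqrt p * (2 * τ * Real.sqrt p * Real.sqrt π) := by
        linear_combination (-2 * τ * Real.sqrt π) * hsp
      rw [heq]
      nth_rewrite 1 [← mul_one (Real.sqrt p)]
      exact mul_le_mul_of_nonneg_left key (Real.sqrt_nonneg p)
    exact cap_final g B (Real.exp (-(p * τ^2))) ((1-τ^2) ^ p) τ p hgpos (Real.exp_pos _)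
      hτpos hp0 (Real.rpow_nonneg hx0 p) hBle hxp hgb

end CapAux

/-- The regularized incomplete beta function `I_x(p, q)`. -/
noncomputable def regIncBeta (p q x : ℝ) : ℝ :=
  (Real.Gamma (p + q) / (Real.Gamma p * Real.Gamma q)) *
    ∫ t in (0 : ℝ)..x, t ^ (p - 1) * (1 - t) ^ (q - 1)

/-- **Analytic spherical-cap inequality.** For every integer `d ≥ 2` and every `τ ∈ [0, 1]`,
`Γ(d/2) / (√π · Γ((d-1)/2)) · ∫_τ^1 (1 - t²)^((d-3)/2) dt ≤ exp(-(d-1)τ²/2)`; equivalently,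
`(1/2) · I_{1-τ²}((d-1)/2, 1/2) ≤ exp(-(d-1)τ²/2)`. -/
theorem cap_integral_le_exp (d : ℕ) (hd : 2 ≤ d) (τ : ℝ) (hτ : τ ∈ Set.Icc (0 : ℝ) 1) :
    (Real.Gamma ((d : ℝ) / 2) / (Real.sqrt π * Real.Gamma (((d : ℝ) - 1) / 2))) *
        (∫ t in τ..1, (1 - t ^ 2) ^ (((d : ℝ) - 3) / 2))
      ≤ Real.exp (-(((d : ℝ) - 1) * τ ^ 2 / 2)) ∧
    (1 / 2) * regIncBeta (((d : ℝ) - 1) / 2) (1 / 2) (1 - τ ^ 2)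
      ≤ Real.exp (-(((d : ℝ) - 1) * τ ^ 2 / 2)) := by
  obtain ⟨hτ0, hτ1⟩ := hτ
  have hd2 : (2:ℝ) ≤ (d:ℝ) := by exact_mod_cast hd
  have hp : (1:ℝ)/2 ≤ ((d:ℝ)-1)/2 := by linarith
  have hmain := main_ineq (((d:ℝ)-1)/2) τ hp hτ0 hτ1
  have hsub := cap_subst (((d:ℝ)-1)/2) τ hτ0 hτ1
  have e1 : ((d:ℝ))/2 = ((d:ℝ)-1)/2 + 1/2 := by ring
  have e2 : ((d:ℝ)-3)/2 = ((d:ℝ)-1)/2 - 1 := by ring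
  have e3 : -(((d:ℝ)-1) * τ^2/2) = -(((d:ℝ)-1)/2 * τ^2) := by ring
  constructor
  · rw [e1, e2, e3]
    have hint_eq : (∫ t in τ..1, (1-t^2) ^ (((d:ℝ)-1)/2 - 1))
        = (1/2) * ∫ s in (0:ℝ)..(1-τ^2), s ^ (((d:ℝ)-1)/2-1) * (1-s) ^ (-(1/2) : ℝ) := by
      rw [hsub]; ring
    rw [hint_eq]
    exact hmain
  · rw [e3]
    simp only [regIncBeta]
    rw [show ((1:ℝ)/2 - 1) = (-(1/2) : ℝ) by norm_num, Real.Gamma_one_half_eq]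
    refine le_trans (le_of_eq ?_) hmain
    ring
end

section
/- Let d ≥ 2, let X be a random vector in ℝ^d distributed according to the standard Gaussian measure N(0, I_d), and let v ∈ ℝ^d be a fixed unit vector. Then for every τ ∈ [0, 1], the probability that |⟨X, v⟩| ≥ τ‖X‖ is at most 2·exp(−(d−1)τ²/2); in particular, the cosine similarity between X and v is tightly concentrated around zero in high dimension. -/
open MeasureTheory Real
open scoped RealInnerProductSpace ENNReal

namespace GaussianCosineAux

open ProbabilityTheory

lemma lintegral_pi_prod {n : ℕ} (μ : Measure ℝ) [SigmaFinite μ]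
    (f : Fin n → ℝ → ℝ≥0∞) (hf : ∀ i, Measurable (f i)) :
    ∫⁻ y, ∏ i, f i (y i) ∂Measure.pi (fun _ : Fin n => μ) = ∏ i, ∫⁻ x, f i x ∂μ := by
  induction n with
  | zero =>
      simp only [Finset.univ_eq_empty, Finset.prod_empty, lintegral_const, one_mul]
      rw [Measure.pi_of_empty]
      simp
  | succ n ih =>
      have hP := (measurePreserving_piFinSuccAbove (fun _ : Fin (n+1) => μ) 0).symm
      have hmeas : Measurable fun y : Fin (n+1) → ℝ => ∏ i, f i (y i) :=
        Finset.measurable_prod _ fun i _ => (hf i).comp (measurable_pi_apply i)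
      rw [← hP.lintegral_comp hmeas]
      have : ∀ p : ℝ × (Fin n → ℝ),
          (∏ i, f i (((MeasurableEquiv.piFinSuccAbove (fun _ => ℝ) 0).symm p) i))
            = f 0 p.1 * ∏ i : Fin n, f i.succ (p.2 i) := by
        intro p
        simp_rw [MeasurableEquiv.piFinSuccAbove_symm_apply, Fin.insertNthEquiv,
          Equiv.coe_fn_mk, Fin.insertNth_zero, Fin.prod_univ_succ, Fin.cons_zero, Fin.cons_succ,
          cast_eq]
      simp_rw [this]
      have hg : Measurable fun w : Fin n → ℝ => ∏ i : Fin n, f i.succ (w i) :=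
        Finset.measurable_prod _ fun i _ => (hf i.succ).comp (measurable_pi_apply i)
      rw [lintegral_prod_mul (f := fun x => f 0 x)
        (g := fun w : Fin n → ℝ => ∏ i : Fin n, f i.succ (w i)) (hf 0).aemeasurable hg.aemeasurable]
      rw [ih (fun i => f i.succ) (fun i => hf i.succ), Fin.prod_univ_succ]

lemma lintegral_ofReal_gaussianReal (g : ℝ → ℝ) (hg : Measurable g)
    (hgi : Integrable (fun x => gaussianPDFReal 0 1 x * g x)) (hg0 : ∀ x, 0 ≤ g x) :
    ∫⁻ x, ENNReal.ofReal (g x) ∂gaussianReal 0 1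
      = ENNReal.ofReal (∫ x, gaussianPDFReal 0 1 x * g x) := by
  rw [gaussianReal_of_var_ne_zero 0 one_ne_zero, gaussianPDF_def,
    lintegral_withDensity_eq_lintegral_mul _
      ((measurable_gaussianPDFReal 0 1).ennreal_ofReal) hg.ennreal_ofReal]
  rw [ofReal_integral_eq_lintegral_ofReal hgi
    (Filter.Eventually.of_forall fun x => mul_nonneg (gaussianPDFReal_nonneg 0 1 x) (hg0 x))]
  congr 1
  ext x
  simp only [Pi.mul_apply]
  rw [ENNReal.ofReal_mul (gaussianPDFReal_nonneg 0 1 x)]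

lemma integral_pdf_exp_mul (t : ℝ) :
    ∫ x, gaussianPDFReal 0 1 x * Real.exp (t * x) = Real.exp (t ^ 2 / 2) := by
  have key : ∀ x : ℝ, gaussianPDFReal 0 1 x * Real.exp (t * x)
      = (Real.sqrt (2 * π))⁻¹ * Real.exp (t ^ 2 / 2) * Real.exp (-(1/2) * (x - t) ^ 2) := by
    intro x
    simp only [gaussianPDFReal, NNReal.coe_one, mul_one, sub_zero]
    rw [mul_assoc, mul_assoc, ← Real.exp_add, ← Real.exp_add]
    ring_nf
  simp_rw [key]
  rw [integral_const_mul, integral_sub_right_eq_self (μ := volume)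
    (fun x => Real.exp (-(1/2) * x ^ 2)) t, integral_gaussian]
  rw [show π / (1/2 : ℝ) = 2 * π by ring]
  field_simp

lemma integral_pdf_exp_neg_sq (s : ℝ) (hs : 0 ≤ s) :
    ∫ x, gaussianPDFReal 0 1 x * Real.exp (-s * x ^ 2) = Real.sqrt (1 / (1 + 2 * s)) := by
  have key : ∀ x : ℝ, gaussianPDFReal 0 1 x * Real.exp (-s * x ^ 2)
      = (Real.sqrt (2 * π))⁻¹ * Real.exp (-(s + 1/2) * x ^ 2) := by
    intro x
    simp only [gaussianPDFReal, NNReal.coe_one, mul_one, sub_zero]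
    rw [mul_assoc, ← Real.exp_add]
    ring_nf
  simp_rw [key]
  rw [integral_const_mul, integral_gaussian, ← Real.sqrt_inv, ← Real.sqrt_mul (by positivity)]
  congr 1
  have h1 : (0:ℝ) < s + 1/2 := by linarith
  field_simp
  ring

lemma integrable_pdf_exp_mul (t : ℝ) :
    Integrable (fun x => gaussianPDFReal 0 1 x * Real.exp (t * x)) := by
  have key : ∀ x : ℝ, gaussianPDFReal 0 1 x * Real.exp (t * x)
      = (Real.sqrt (2 * π))⁻¹ * Real.exp (t ^ 2 / 2) * Real.exp (-(1/2) * (x - t) ^ 2) := by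
    intro x
    simp only [gaussianPDFReal, NNReal.coe_one, mul_one, sub_zero]
    rw [mul_assoc, mul_assoc, ← Real.exp_add, ← Real.exp_add]
    ring_nf
  simp_rw [key]
  exact ((integrable_exp_neg_mul_sq (by norm_num : (0:ℝ) < 1/2)).comp_sub_right t).const_mul _

lemma integrable_pdf_exp_neg_sq (s : ℝ) (hs : 0 ≤ s) :
    Integrable (fun x => gaussianPDFReal 0 1 x * Real.exp (-s * x ^ 2)) := by
  have key : ∀ x : ℝ, gaussianPDFReal 0 1 x * Real.exp (-s * x ^ 2)
      = (Real.sqrt (2 * π))⁻¹ * Real.exp (-(s + 1/2) * x ^ 2) := by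
    intro x
    simp only [gaussianPDFReal, NNReal.coe_one, mul_one, sub_zero]
    rw [mul_assoc, ← Real.exp_add]
    ring_nf
  simp_rw [key]
  exact (integrable_exp_neg_mul_sq (by linarith : (0:ℝ) < s + 1/2)).const_mul _

lemma lintegral_exp_mul_gaussian (t : ℝ) :
    ∫⁻ x, ENNReal.ofReal (Real.exp (t * x)) ∂gaussianReal 0 1
      = ENNReal.ofReal (Real.exp (t ^ 2 / 2)) := by
  rw [lintegral_ofReal_gaussianReal _ (by fun_prop) (integrable_pdf_exp_mul t)
    (fun x => (Real.exp_pos _).le), integral_pdf_exp_mul]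

lemma lintegral_exp_neg_sq_gaussian (s : ℝ) (hs : 0 ≤ s) :
    ∫⁻ x, ENNReal.ofReal (Real.exp (-s * x ^ 2)) ∂gaussianReal 0 1
      = ENNReal.ofReal (Real.sqrt (1 / (1 + 2 * s))) := by
  rw [lintegral_ofReal_gaussianReal _ (by fun_prop) (integrable_pdf_exp_neg_sq s hs)
    (fun x => (Real.exp_pos _).le), integral_pdf_exp_neg_sq s hs]

lemma gaussian_tail_bound (a : ℝ) (ha : 0 ≤ a) :
    gaussianReal 0 1 {z : ℝ | a ≤ |z|} ≤ ENNReal.ofReal (2 * Real.exp (-(a ^ 2) / 2)) := by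
  set γ := gaussianReal 0 1
  have hS : MeasurableSet {z : ℝ | a ≤ |z|} :=
    measurableSet_le measurable_const (by fun_prop)
  have h1 : γ {z : ℝ | a ≤ |z|}
      = ∫⁻ z, ({z : ℝ | a ≤ |z|}).indicator (fun _ => (1:ℝ≥0∞)) z ∂γ := by
    rw [lintegral_indicator hS, setLIntegral_one]
  rw [h1]
  have h2 : ∀ z : ℝ, ({z : ℝ | a ≤ |z|}).indicator (fun _ => (1:ℝ≥0∞)) z
      ≤ ENNReal.ofReal (Real.exp (a * z - a ^ 2)) + ENNReal.ofReal (Real.exp (-a * z - a ^ 2)) := by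
    intro z
    rcases Set.indicator_eq_zero_or_self {z : ℝ | a ≤ |z|} (fun _ => (1:ℝ≥0∞)) z with h | h
    · rw [h]; exact zero_le
    · rw [h]
      have hz : z ∈ {z : ℝ | a ≤ |z|} := by
        by_contra hc
        simp [Set.indicator_of_notMem hc] at h
      have haz : a ^ 2 ≤ a * |z| := by
        have := hz
        simp only [Set.mem_setOf_eq] at this
        calc a ^ 2 = a * a := sq a
        _ ≤ a * |z| := by nlinarith
      rcases abs_cases z with ⟨he, _⟩ | ⟨he, _⟩
      · calc (1:ℝ≥0∞) = ENNReal.ofReal (Real.exp 0) := by simp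
          _ ≤ ENNReal.ofReal (Real.exp (a * z - a ^ 2)) := by
              apply ENNReal.ofReal_le_ofReal
              apply Real.exp_le_exp.2
              rw [he] at haz; linarith
          _ ≤ _ := le_self_add
      · calc (1:ℝ≥0∞) = ENNReal.ofReal (Real.exp 0) := by simp
          _ ≤ ENNReal.ofReal (Real.exp (-a * z - a ^ 2)) := by
              apply ENNReal.ofReal_le_ofReal
              apply Real.exp_le_exp.2
              rw [he] at haz
              nlinarith
          _ ≤ _ := le_add_self
  calc ∫⁻ z, ({z : ℝ | a ≤ |z|}).indicator (fun _ => (1:ℝ≥0∞)) z ∂γ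
      ≤ ∫⁻ z, (ENNReal.ofReal (Real.exp (a * z - a ^ 2))
          + ENNReal.ofReal (Real.exp (-a * z - a ^ 2))) ∂γ := lintegral_mono h2
    _ = (∫⁻ z, ENNReal.ofReal (Real.exp (a * z - a ^ 2)) ∂γ)
        + ∫⁻ z, ENNReal.ofReal (Real.exp (-a * z - a ^ 2)) ∂γ := by
        rw [lintegral_add_left (by fun_prop)]
    _ = ENNReal.ofReal (Real.exp (-(a^2))) * (∫⁻ z, ENNReal.ofReal (Real.exp (a * z)) ∂γ)
        + ENNReal.ofReal (Real.exp (-(a^2))) * ∫⁻ z, ENNReal.ofReal (Real.exp (-a * z)) ∂γ := by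
        congr 1
        · rw [← lintegral_const_mul _ (by fun_prop)]
          congr 1; ext z
          rw [← ENNReal.ofReal_mul (Real.exp_pos _).le, ← Real.exp_add]
          ring_nf
        · rw [← lintegral_const_mul _ (by fun_prop)]
          congr 1; ext z
          rw [← ENNReal.ofReal_mul (Real.exp_pos _).le, ← Real.exp_add]
          ring_nf
    _ = ENNReal.ofReal (2 * Real.exp (-(a ^ 2) / 2)) := by
        rw [lintegral_exp_mul_gaussian a, lintegral_exp_mul_gaussian (-a)]
        rw [← ENNReal.ofReal_mul (Real.exp_pos _).le, ← ENNReal.ofReal_mul (Real.exp_pos _).le]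
        rw [← ENNReal.ofReal_add (by positivity) (by positivity)]
        congr 1
        rw [← Real.exp_add, ← Real.exp_add]
        rw [show (-a:ℝ)^2 = a^2 by ring]
        rw [show -(a^2) + a^2/2 = -(a^2)/2 by ring]
        ring

lemma pi_gaussian_eq (n : ℕ) :
    Measure.pi (fun _ : Fin n => gaussianReal 0 1)
      = (Measure.pi fun _ : Fin n => (volume : Measure ℝ)).withDensity
          (fun y => ∏ i, ENNReal.ofReal (gaussianPDFReal 0 1 (y i))) := by
  refine Measure.pi_eq fun s hs => ?_
  rw [withDensity_apply _ (MeasurableSet.univ_pi hs)]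
  rw [← lintegral_indicator (MeasurableSet.univ_pi hs)]
  have : ∀ y : Fin n → ℝ, (Set.univ.pi s).indicator
        (fun y => ∏ i, ENNReal.ofReal (gaussianPDFReal 0 1 (y i))) y
      = ∏ i, (s i).indicator (fun x => ENNReal.ofReal (gaussianPDFReal 0 1 x)) (y i) := by
    intro y
    by_cases hy : y ∈ Set.univ.pi s
    · rw [Set.indicator_of_mem hy]
      refine Finset.prod_congr rfl fun i _ => ?_
      rw [Set.indicator_of_mem (hy i (Set.mem_univ i))]
    · rw [Set.indicator_of_notMem hy]
      obtain ⟨j, hj⟩ := not_forall.mp (by simpa [Set.mem_univ_pi] using hy)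
      exact (Finset.prod_eq_zero (Finset.mem_univ j) (Set.indicator_of_notMem hj _)).symm
  simp_rw [this]
  rw [lintegral_pi_prod _ _ (fun i => ((measurable_gaussianPDFReal 0 1).ennreal_ofReal).indicator (hs i))]
  refine Finset.prod_congr rfl fun i _ => ?_
  rw [lintegral_indicator (hs i), gaussianReal_apply 0 one_ne_zero, gaussianPDF_def]

lemma map_withDensity_equiv {α β : Type*} [MeasurableSpace α] [MeasurableSpace β]
    (e : α ≃ᵐ β) (μ : Measure α) (f : β → ℝ≥0∞) (hf : Measurable f) :
    (μ.withDensity (fun x => f (e x))).map e = (μ.map e).withDensity f := by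
  ext s hs
  rw [Measure.map_apply e.measurable hs, withDensity_apply _ hs,
    withDensity_apply _ (e.measurable hs), setLIntegral_map hs hf e.measurable]

lemma stdGaussian_eq_withDensity (d : ℕ) :
    stdGaussian d = (volume : Measure (EuclideanSpace ℝ (Fin d))).withDensity
      (fun x => ENNReal.ofReal ((Real.sqrt (2 * π))⁻¹ ^ d * Real.exp (-(‖x‖ ^ 2) / 2))) := by
  set f : EuclideanSpace ℝ (Fin d) → ℝ≥0∞ :=
    fun x => ENNReal.ofReal ((Real.sqrt (2 * π))⁻¹ ^ d * Real.exp (-(‖x‖ ^ 2) / 2)) with hfdef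
  have hf : Measurable f := by
    apply Measurable.ennreal_ofReal
    fun_prop
  have hdens : ∀ y : Fin d → ℝ,
      (∏ i, ENNReal.ofReal (gaussianPDFReal 0 1 (y i)))
        = f ((MeasurableEquiv.toLp 2 (Fin d → ℝ)) y) := by
    intro y
    have hnorm : ‖(MeasurableEquiv.toLp 2 (Fin d → ℝ)) y‖ ^ 2 = ∑ i, (y i) ^ 2 := by
      rw [EuclideanSpace.norm_eq, Real.sq_sqrt (by positivity)]
      simp only [Real.norm_eq_abs, sq_abs]
      rfl
    rw [hfdef]
    simp only [hnorm]
    rw [← ENNReal.ofReal_prod_of_nonneg (fun i _ => gaussianPDFReal_nonneg 0 1 (y i))]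
    congr 1
    have : ∀ i : Fin d, gaussianPDFReal 0 1 (y i)
        = (Real.sqrt (2 * π))⁻¹ * Real.exp (-((y i) ^ 2) / 2) := by
      intro i; simp [gaussianPDFReal]
    simp_rw [this]
    rw [Finset.prod_mul_distrib, Finset.prod_const, Finset.card_univ, Fintype.card_fin,
      ← Real.exp_sum]
    congr 1
    rw [← Finset.sum_div, ← Finset.sum_neg_distrib]
  rw [_root_.stdGaussian, pi_gaussian_eq]
  simp_rw [hdens]
  rw [map_withDensity_equiv _ _ _ hf, ← volume_pi,
    ← (MeasurableEquiv.toLp 2 (Fin d → ℝ)).symm_symm,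
    (EuclideanSpace.volume_preserving_symm_measurableEquiv_toLp (Fin d)).symm.map_eq]

lemma stdGaussian_map_isometry {d : ℕ}
    (f : EuclideanSpace ℝ (Fin d) ≃ₗᵢ[ℝ] EuclideanSpace ℝ (Fin d)) :
    (stdGaussian d).map f = stdGaussian d := by
  rw [stdGaussian_eq_withDensity]
  set g : EuclideanSpace ℝ (Fin d) → ℝ≥0∞ :=
    fun x => ENNReal.ofReal ((Real.sqrt (2 * π))⁻¹ ^ d * Real.exp (-(‖x‖ ^ 2) / 2)) with hgdef
  have hg : Measurable g := by
    apply Measurable.ennreal_ofReal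
    fun_prop
  have key : (volume.withDensity (fun x => g (f.toHomeomorph.toMeasurableEquiv x))).map
        f.toHomeomorph.toMeasurableEquiv
      = ((volume : Measure (EuclideanSpace ℝ (Fin d))).map
          f.toHomeomorph.toMeasurableEquiv).withDensity g :=
    map_withDensity_equiv _ _ _ hg
  have hc : (⇑f.toHomeomorph.toMeasurableEquiv :
      EuclideanSpace ℝ (Fin d) → EuclideanSpace ℝ (Fin d)) = ⇑f := rfl
  rw [hc] at key
  have hginv : (fun x => g (f x)) = g := by
    funext x; rw [hgdef]; simp [f.norm_map]
  rw [hginv] at key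
  rw [key, f.measurePreserving.map_eq, ← stdGaussian_eq_withDensity]

lemma pi_gaussian_tail (m : ℕ) (hm : 1 ≤ m) (τ : ℝ) (hτ0 : 0 ≤ τ) (hτ1 : τ ≤ 1) :
    Measure.pi (fun _ : Fin (m+1) => gaussianReal 0 1)
        {y : Fin (m+1) → ℝ | τ ^ 2 * (∑ i, (y i) ^ 2) ≤ (y 0) ^ 2}
      ≤ ENNReal.ofReal (2 * Real.exp (-((m : ℝ) * τ ^ 2 / 2))) := by
  set γ := gaussianReal 0 1 with hγ
  set μ := Measure.pi (fun _ : Fin (m+1) => γ) with hμ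
  rcases eq_or_lt_of_le hτ1 with h1 | hlt
  · subst h1
    have hone : (0 : Fin (m+1)) ≠ (1 : Fin (m+1)) := by
      simp [Fin.ext_iff, Fin.val_one, Nat.mod_eq_of_lt (by omega : 1 < m + 1)]
    have hsub : {y : Fin (m+1) → ℝ | (1:ℝ) ^ 2 * (∑ i, (y i) ^ 2) ≤ (y 0) ^ 2}
        ⊆ {y : Fin (m+1) → ℝ | y 1 = 0} := by
      intro y hy
      simp only [Set.mem_setOf_eq, one_pow, one_mul] at hy
      have hpair : (y 0) ^ 2 + (y 1) ^ 2 ≤ ∑ i, (y i) ^ 2 := by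
        rw [show (y 0) ^ 2 + (y 1) ^ 2 = ∑ i ∈ ({0, 1} : Finset (Fin (m+1))), (y i) ^ 2 from
          (Finset.sum_pair (f := fun i => (y i) ^ 2) hone).symm]
        exact Finset.sum_le_sum_of_subset_of_nonneg (Finset.subset_univ _)
          (fun i _ _ => sq_nonneg _)
      have : (y 1) ^ 2 ≤ 0 := by linarith
      have := le_antisymm this (sq_nonneg _)
      exact (pow_eq_zero_iff two_ne_zero).mp this
    have hnull : μ {y : Fin (m+1) → ℝ | y 1 = 0} = 0 := by
      have hset : {y : Fin (m+1) → ℝ | y 1 = 0}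
          = Set.univ.pi (fun i => if i = 1 then ({0} : Set ℝ) else Set.univ) := by
        ext y
        simp only [Set.mem_setOf_eq, Set.mem_univ_pi]
        constructor
        · intro h i
          by_cases hi : i = 1 <;> simp [hi, h]
        · intro h
          have := h 1
          simpa using this
      rw [hset, hμ, Measure.pi_pi]
      refine Finset.prod_eq_zero (Finset.mem_univ 1) ?_
      simp only [if_pos rfl]
      exact (gaussianReal_absolutelyContinuous 0 one_ne_zero) Real.volume_singleton
    calc μ _ ≤ μ {y : Fin (m+1) → ℝ | y 1 = 0} := measure_mono hsub
      _ = 0 := hnull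
      _ ≤ _ := zero_le
  · have ht1 : 0 < 1 - τ ^ 2 := by nlinarith
    set s : ℝ := τ ^ 2 / (2 * (1 - τ ^ 2)) with hs
    have hs0 : 0 ≤ s := by positivity
    set B : Set (ℝ × (Fin m → ℝ)) :=
      {p | τ ^ 2 * (∑ j, (p.2 j) ^ 2) ≤ (1 - τ ^ 2) * p.1 ^ 2} with hB
    have hBmeas : MeasurableSet B := by
      apply measurableSet_le <;> fun_prop
    have he : ∀ y : Fin (m+1) → ℝ,
        (MeasurableEquiv.piFinSuccAbove (fun _ : Fin (m+1) => ℝ) 0) y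
          = (y 0, fun j => y (Fin.succ j)) := fun _ => rfl
    have hpre : {y : Fin (m+1) → ℝ | τ ^ 2 * (∑ i, (y i) ^ 2) ≤ (y 0) ^ 2}
        = (MeasurableEquiv.piFinSuccAbove (fun _ : Fin (m+1) => ℝ) 0) ⁻¹' B := by
      ext y
      simp only [Set.mem_preimage, he, hB, Set.mem_setOf_eq]
      rw [Fin.sum_univ_succ]
      constructor
      · intro h; nlinarith [h]
      · intro h; nlinarith [h]
    have hmp := measurePreserving_piFinSuccAbove (fun _ : Fin (m+1) => γ) 0
    have hstep1 : μ {y : Fin (m+1) → ℝ | τ ^ 2 * (∑ i, (y i) ^ 2) ≤ (y 0) ^ 2}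
        = (γ.prod (Measure.pi fun _ : Fin m => γ)) B := by
      rw [hpre, hμ]
      exact hmp.measure_preimage hBmeas.nullMeasurableSet
    rw [hstep1]
    have hsect : ∀ w : Fin m → ℝ,
        ((fun z => (z, w)) ⁻¹' B)
          = {z : ℝ | Real.sqrt (τ ^ 2 * (∑ j, (w j) ^ 2) / (1 - τ ^ 2)) ≤ |z|} := by
      intro w
      ext z
      simp only [Set.mem_preimage, hB, Set.mem_setOf_eq]
      have hq : 0 ≤ τ ^ 2 * (∑ j, (w j) ^ 2) := by positivity
      rw [show |z| = Real.sqrt (z ^ 2) from (Real.sqrt_sq_eq_abs z).symm]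
      rw [Real.sqrt_le_sqrt_iff (sq_nonneg z), div_le_iff₀ ht1]
      constructor <;> intro h <;> linarith
    have hprod : (γ.prod (Measure.pi fun _ : Fin m => γ)) B
        = ∫⁻ w, γ ((fun z => (z, w)) ⁻¹' B) ∂(Measure.pi fun _ : Fin m => γ) :=
      Measure.prod_apply_symm hBmeas
    rw [hprod]
    have hbound : ∀ w : Fin m → ℝ, γ ((fun z => (z, w)) ⁻¹' B)
        ≤ ENNReal.ofReal 2 * ∏ j, ENNReal.ofReal (Real.exp (-s * (w j) ^ 2)) := by
      intro w
      rw [hsect w]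
      set a : ℝ := Real.sqrt (τ ^ 2 * (∑ j, (w j) ^ 2) / (1 - τ ^ 2)) with ha
      have ha0 : 0 ≤ a := Real.sqrt_nonneg _
      refine (gaussian_tail_bound a ha0).trans ?_
      have ha2 : a ^ 2 = τ ^ 2 * (∑ j, (w j) ^ 2) / (1 - τ ^ 2) :=
        Real.sq_sqrt (by positivity)
      have hexp : -(a ^ 2) / 2 = ∑ j, (-s * (w j) ^ 2) := by
        rw [ha2, hs]
        rw [show ∑ j, (-(τ ^ 2 / (2 * (1 - τ ^ 2))) * (w j) ^ 2)
            = -(τ ^ 2 / (2 * (1 - τ ^ 2))) * ∑ j, (w j) ^ 2 from (Finset.mul_sum _ _ _).symm]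
        field_simp
        try ring
        try exact Or.inl trivial
      rw [ENNReal.ofReal_mul (by norm_num : (0:ℝ) ≤ 2)]
      refine mul_le_mul_right (le_of_eq ?_) _
      rw [hexp, Real.exp_sum, ENNReal.ofReal_prod_of_nonneg (fun j _ => (Real.exp_pos _).le)]
    refine le_trans (lintegral_mono hbound) ?_
    rw [lintegral_const_mul _ (Finset.measurable_prod _ fun j _ =>
      (by fun_prop : Measurable fun w : Fin m → ℝ => ENNReal.ofReal (Real.exp (-s * (w j) ^ 2))))]
    rw [lintegral_pi_prod _ (fun _ x => ENNReal.ofReal (Real.exp (-s * x ^ 2)))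
      (fun _ => by fun_prop)]
    simp_rw [hγ, lintegral_exp_neg_sq_gaussian s hs0]
    rw [Finset.prod_const, Finset.card_univ, Fintype.card_fin]
    have h12 : (1 : ℝ) + 2 * s = 1 / (1 - τ ^ 2) := by
      rw [hs]; field_simp
      ring
    rw [h12, one_div_one_div]
    rw [← ENNReal.ofReal_pow (Real.sqrt_nonneg _), ← ENNReal.ofReal_mul (by norm_num : (0:ℝ) ≤ 2)]
    apply ENNReal.ofReal_le_ofReal
    have hsq : Real.sqrt (1 - τ ^ 2) ≤ Real.exp (-(τ ^ 2) / 2) := by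
      rw [show -(τ ^ 2) / 2 = (-(τ ^ 2)) / 2 by ring, Real.exp_half]
      apply Real.sqrt_le_sqrt
      linarith [Real.add_one_le_exp (-(τ ^ 2))]
    calc 2 * Real.sqrt (1 - τ ^ 2) ^ m ≤ 2 * Real.exp (-(τ ^ 2) / 2) ^ m := by
          have := pow_le_pow_left₀ (Real.sqrt_nonneg _) hsq m
          linarith
      _ = 2 * Real.exp (-((m : ℝ) * τ ^ 2 / 2)) := by
          rw [← Real.exp_nat_mul]
          ring_nf

end GaussianCosineAux

/-- **Two-sided exponential bound.** For `d ≥ 2`, a standard Gaussian vector `X` in `ℝ^d` and a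
fixed unit vector `v`, for every `τ ∈ [0, 1]` the probability that `|⟪X, v⟫| ≥ τ‖X‖`
(i.e. that the absolute cosine similarity of `X` and `v` is at least `τ`) is at most
`2·exp(-(d-1)τ²/2)`: the cosine similarity concentrates around zero in high dimension. -/
theorem gaussian_abs_cosine_prob_le_two_exp (d : ℕ) (hd : 2 ≤ d)
    (v : EuclideanSpace ℝ (Fin d)) (hv : ‖v‖ = 1)
    (τ : ℝ) (hτ : τ ∈ Set.Icc (0 : ℝ) 1) :
    (stdGaussian d {x | τ * ‖x‖ ≤ |⟪x, v⟫|}).toReal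
      ≤ 2 * Real.exp (-(((d : ℝ) - 1) * τ ^ 2 / 2)) := by
  classical
  obtain ⟨hτ0, hτ1⟩ := hτ
  obtain ⟨m, rfl⟩ : ∃ m, d = m + 1 := ⟨d - 1, by omega⟩
  have hm : 1 ≤ m := by omega
  -- an orthonormal basis whose first vector is `v`
  have hcard : Module.finrank ℝ (EuclideanSpace ℝ (Fin (m+1))) = Fintype.card (Fin (m+1)) := by
    simp [finrank_euclideanSpace]
  have hortho : Orthonormal ℝ (({0} : Set (Fin (m+1))).restrict (fun _ => v)) := by
    constructor
    · intro i; exact hv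
    · intro i j hij
      exfalso
      apply hij
      apply Subtype.ext
      have h1 := i.2
      have h2 := j.2
      simp only [Set.mem_singleton_iff] at h1 h2
      rw [h1, h2]
  obtain ⟨b, hb⟩ := hortho.exists_orthonormalBasis_extension_of_card_eq hcard
  have hb0 : b 0 = v := hb 0 rfl
  set f : EuclideanSpace ℝ (Fin (m+1)) ≃ₗᵢ[ℝ] EuclideanSpace ℝ (Fin (m+1)) := b.repr.symm with hf
  have hS : MeasurableSet {x : EuclideanSpace ℝ (Fin (m+1)) | τ * ‖x‖ ≤ |⟪x, v⟫|} := by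
    apply measurableSet_le
    · exact (continuous_const.mul continuous_norm).measurable
    · exact ((continuous_id.inner continuous_const).abs).measurable
  have hfv : f (EuclideanSpace.single 0 1) = v := by
    rw [hf]
    rw [b.repr_symm_single 0]
    exact hb0
  have step1 : stdGaussian (m+1) {x | τ * ‖x‖ ≤ |⟪x, v⟫|}
      = stdGaussian (m+1) {x : EuclideanSpace ℝ (Fin (m+1)) | τ * ‖x‖ ≤ |x 0|} := by
    conv_lhs => rw [← GaussianCosineAux.stdGaussian_map_isometry f]
    rw [Measure.map_apply f.continuous.measurable hS]
    congr 1
    ext x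
    simp only [Set.mem_preimage, Set.mem_setOf_eq, f.norm_map]
    have hinner : ⟪f x, v⟫ = x 0 := by
      rw [← hfv, LinearIsometryEquiv.inner_map_map, EuclideanSpace.inner_single_right]
      simp
    rw [hinner]
  have step2 : stdGaussian (m+1) {x : EuclideanSpace ℝ (Fin (m+1)) | τ * ‖x‖ ≤ |x 0|}
      = Measure.pi (fun _ : Fin (m+1) => ProbabilityTheory.gaussianReal 0 1)
          {y : Fin (m+1) → ℝ | τ ^ 2 * (∑ i, (y i) ^ 2) ≤ (y 0) ^ 2} := by
    rw [stdGaussian]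
    rw [Measure.map_apply (MeasurableEquiv.measurable _) (by
      apply measurableSet_le
      · exact (continuous_const.mul continuous_norm).measurable
      · exact ((measurable_pi_apply 0).comp
          (MeasurableEquiv.toLp 2 (Fin (m+1) → ℝ)).symm.measurable).abs)]
    congr 1
    ext y
    simp only [Set.mem_preimage, Set.mem_setOf_eq]
    have hnorm : ‖(MeasurableEquiv.toLp 2 (Fin (m+1) → ℝ)) y‖
        = Real.sqrt (∑ i, (y i) ^ 2) := by
      rw [EuclideanSpace.norm_eq]
      simp only [Real.norm_eq_abs, sq_abs]
      rfl
    have hcoord : ((MeasurableEquiv.toLp 2 (Fin (m+1) → ℝ)) y) 0 = y 0 := rfl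
    rw [hnorm, hcoord]
    have hQ : (0:ℝ) ≤ ∑ i, (y i) ^ 2 := by positivity
    have hts : τ * Real.sqrt (∑ i, (y i) ^ 2) = Real.sqrt (τ ^ 2 * ∑ i, (y i) ^ 2) := by
      rw [Real.sqrt_mul (sq_nonneg τ), Real.sqrt_sq hτ0]
    rw [hts, show |y 0| = Real.sqrt ((y 0) ^ 2) from (Real.sqrt_sq_eq_abs _).symm,
      Real.sqrt_le_sqrt_iff (sq_nonneg _)]
  rw [step1, step2]
  have hfinal := GaussianCosineAux.pi_gaussian_tail m hm τ hτ0 hτ1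
  refine ENNReal.toReal_le_of_le_ofReal (by positivity) (hfinal.trans ?_)
  apply ENNReal.ofReal_le_ofReal
  have : ((m : ℝ)) = ((m+1 : ℕ) : ℝ) - 1 := by push_cast; ring
  rw [← this]
end
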